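/- Define the kinetic distance $d_{\mathrm{kin}}(z_1,z_2)$ between points of $\mathbb{R}^{1+2d}$ as the infimum over $r > 0$ such that there exists $z$ with $z_1, z_2 \in Q_r(z)$, where $Q_r(z) = \{z \circ \zeta : \zeta \in Q_r\}$. Then $d_{\mathrm{kin}}(z_1,z_2) = \min_{w \in \mathbb{R}^d} \max\big(|t_1-t_2|^{1/2}, |v_1-w|, |v_2-w|, 2^{-1/3}|(x_1-x_2) - (t_1-t_2)w|^{1/3}\big)$. -/

import Mathlib

/-- A point of the kinetic phase space `ℝ × ℝᵈ × ℝᵈ` (time, position, velocity). -/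
abbrev KPt (d : ℕ) := ℝ × EuclideanSpace ℝ (Fin d) × EuclideanSpace ℝ (Fin d)

/-- The Galilean group operation `z₀ ∘ z = (t₀ + t, x₀ + x + t v₀, v₀ + v)`. -/
noncomputable def kOp {d : ℕ} (z₀ z : KPt d) : KPt d :=
  (z₀.1 + z.1, z₀.2.1 + z.2.1 + z.1 • z₀.2.2, z₀.2.2 + z.2.2)

/-- The Galilean inverse `z⁻¹ = (-t, -x + t v, -v)`. -/
noncomputable def kInv {d : ℕ} (z : KPt d) : KPt d :=
  (-z.1, -z.2.1 + z.1 • z.2.2, -z.2.2)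

/-- The kinetic cylinder `Q_r = (-r², 0] × B_{r³} × B_r` centered at the origin. -/
def kCyl (d : ℕ) (r : ℝ) : Set (KPt d) :=
  Set.Ioc (-r ^ 2) 0 ×ˢ Metric.ball 0 (r ^ 3) ×ˢ Metric.ball 0 r

/-- The kinetic cylinder `Q_r(z₀) = {z₀ ∘ ζ : ζ ∈ Q_r}` centered at `z₀`. -/
def kCylAt {d : ℕ} (z₀ : KPt d) (r : ℝ) : Set (KPt d) := kOp z₀ '' kCyl d r

/-- The kinetic distance: the infimum of the radii `r > 0` such that both points belong
to a common kinetic cylinder `Q_r(z)`. -/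
noncomputable def kdist {d : ℕ} (z₁ z₂ : KPt d) : ℝ :=
  sInf {r : ℝ | 0 < r ∧ ∃ z : KPt d, z₁ ∈ kCylAt z r ∧ z₂ ∈ kCylAt z r}

/-- The quantity `max(|t₁-t₂|^{1/2}, |v₁-w|, |v₂-w|, 2^{-1/3} |(x₁-x₂)-(t₁-t₂)w|^{1/3})`. -/
noncomputable def kdistCand {d : ℕ} (z₁ z₂ : KPt d)
    (w : EuclideanSpace ℝ (Fin d)) : ℝ :=
  max (|z₁.1 - z₂.1| ^ ((1 : ℝ) / 2))
    (max ‖z₁.2.2 - w‖ (max ‖z₂.2.2 - w‖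
      ((2 : ℝ) ^ (-(1 : ℝ) / 3) *
        ‖(z₁.2.1 - z₂.2.1) - (z₁.1 - z₂.1) • w‖ ^ ((1 : ℝ) / 3))))

lemma half_rpow_lt_iff {a r : ℝ} (ha : 0 ≤ a) (hr : 0 < r) :
    a ^ ((1:ℝ)/2) < r ↔ a < r ^ 2 := by
  have h2 : r ^ (2:ℝ) = r ^ 2 := by
    rw [← Real.rpow_natCast r 2]; norm_num
  rw [one_div, Real.rpow_inv_lt_iff_of_pos ha hr.le (by norm_num : (0:ℝ) < 2), h2]

lemma third_rpow_lt_iff {b r : ℝ} (hb : 0 ≤ b) (hr : 0 < r) :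
    (2:ℝ) ^ (-(1:ℝ)/3) * b ^ ((1:ℝ)/3) < r ↔ b < 2 * r ^ 3 := by
  have h1 : (2:ℝ) ^ (-(1:ℝ)/3) * b ^ ((1:ℝ)/3) = (b/2) ^ ((1:ℝ)/3) := by
    rw [Real.div_rpow hb (by norm_num : (0:ℝ) ≤ 2), neg_div,
      Real.rpow_neg (by norm_num : (0:ℝ) ≤ 2)]
    ring
  have h3 : r ^ (3:ℝ) = r ^ 3 := by
    rw [← Real.rpow_natCast r 3]; norm_num
  rw [h1, one_div, Real.rpow_inv_lt_iff_of_pos (by positivity) hr.le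
    (by norm_num : (0:ℝ) < 3), h3, div_lt_iff₀ (by norm_num : (0:ℝ) < 2)]
  constructor <;> intro h <;> linarith

lemma kdistCand_eq {d : ℕ} (z₁ z₂ : KPt d) (w : EuclideanSpace ℝ (Fin d)) :
    kdistCand z₁ z₂ w =
      max (|z₁.1 - z₂.1| ^ ((1 : ℝ) / 2))
        (max ‖z₁.2.2 - w‖ (max ‖z₂.2.2 - w‖
          ((2 : ℝ) ^ (-(1 : ℝ) / 3) *
            ‖(z₁.2.1 - z₂.2.1) - (z₁.1 - z₂.1) • w‖ ^ ((1 : ℝ) / 3)))) := rfl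

lemma kdistCand_continuous {d : ℕ} (z₁ z₂ : KPt d) :
    Continuous (kdistCand z₁ z₂) := by
  apply Continuous.max continuous_const
  apply Continuous.max ((continuous_const.sub continuous_id).norm)
  apply Continuous.max ((continuous_const.sub continuous_id).norm)
  apply continuous_const.mul
  apply Continuous.rpow_const
  · exact (continuous_const.sub (continuous_id.const_smul (z₁.1 - z₂.1))).norm
  · intro x; right; norm_num

/-- Existence of a minimizer of `kdistCand`. -/
lemma kdistCand_exists_min {d : ℕ} (z₁ z₂ : KPt d) :
    ∃ w : EuclideanSpace ℝ (Fin d),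
      ∀ w' : EuclideanSpace ℝ (Fin d), kdistCand z₁ z₂ w ≤ kdistCand z₁ z₂ w' := by
  have hF := kdistCand_continuous z₁ z₂
  have hkey : ∀ w, ‖z₁.2.2 - w‖ ≤ kdistCand z₁ z₂ w := fun w =>
    (le_max_left _ _).trans (le_max_right _ _)
  set R := kdistCand z₁ z₂ z₁.2.2 with hR
  have hR0 : 0 ≤ R := le_trans (norm_nonneg _) (hkey _)
  obtain ⟨w, hwK, hw⟩ := (isCompact_closedBall z₁.2.2 R).exists_isMinOn
    ⟨z₁.2.2, Metric.mem_closedBall_self hR0⟩ hF.continuousOn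
  refine ⟨w, fun w' => ?_⟩
  by_cases h : w' ∈ Metric.closedBall z₁.2.2 R
  · exact hw h
  · have h1 : R < dist w' z₁.2.2 := by
      simpa [Metric.mem_closedBall] using h
    have h2 : dist w' z₁.2.2 = ‖z₁.2.2 - w'‖ := by
      rw [dist_eq_norm, norm_sub_rev]
    have := hw (Metric.mem_closedBall_self hR0)
    calc kdistCand z₁ z₂ w ≤ R := this
      _ ≤ ‖z₁.2.2 - w'‖ := by rw [← h2]; exact h1.le
      _ ≤ kdistCand z₁ z₂ w' := hkey _

/-- Explicit formula for the kinetic distance: it equals the minimum over `w ∈ ℝᵈ` of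
`kdistCand z₁ z₂ w`, and this minimum is attained. -/
theorem stmt14 {d : ℕ} (z₁ z₂ : KPt d) :
    ∃ w : EuclideanSpace ℝ (Fin d),
      (∀ w' : EuclideanSpace ℝ (Fin d), kdistCand z₁ z₂ w ≤ kdistCand z₁ z₂ w') ∧
      kdist z₁ z₂ = kdistCand z₁ z₂ w := by
  obtain ⟨w, hmin⟩ := kdistCand_exists_min z₁ z₂
  refine ⟨w, hmin, ?_⟩
  set m := kdistCand z₁ z₂ w with hm
  have hm0 : 0 ≤ m :=
    le_trans (Real.rpow_nonneg (abs_nonneg _) _) (le_max_left _ _)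
  have hset : {r : ℝ | 0 < r ∧ ∃ z : KPt d, z₁ ∈ kCylAt z r ∧ z₂ ∈ kCylAt z r}
      = Set.Ioi m := by
    ext r
    simp only [Set.mem_setOf_eq, Set.mem_Ioi]
    constructor
    · rintro ⟨hr, z, ⟨ζ₁, hζ₁, he₁⟩, ⟨ζ₂, hζ₂, he₂⟩⟩
      simp only [kCyl, Set.mem_prod, Set.mem_Ioc, mem_ball_zero_iff] at hζ₁ hζ₂
      obtain ⟨⟨ht₁l, ht₁r⟩, hx₁, hv₁⟩ := hζ₁
      obtain ⟨⟨ht₂l, ht₂r⟩, hx₂, hv₂⟩ := hζ₂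
      have e₁t : z.1 + ζ₁.1 = z₁.1 := congrArg Prod.fst he₁
      have e₂t : z.1 + ζ₂.1 = z₂.1 := congrArg Prod.fst he₂
      have e₁x : z.2.1 + ζ₁.2.1 + ζ₁.1 • z.2.2 = z₁.2.1 :=
        congrArg (fun p : KPt d => p.2.1) he₁
      have e₂x : z.2.1 + ζ₂.2.1 + ζ₂.1 • z.2.2 = z₂.2.1 :=
        congrArg (fun p : KPt d => p.2.1) he₂
      have e₁v : z.2.2 + ζ₁.2.2 = z₁.2.2 :=
        congrArg (fun p : KPt d => p.2.2) he₁
      have e₂v : z.2.2 + ζ₂.2.2 = z₂.2.2 :=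
        congrArg (fun p : KPt d => p.2.2) he₂
      refine lt_of_le_of_lt (hmin z.2.2) ?_
      rw [kdistCand_eq]
      have hδt : z₁.1 - z₂.1 = ζ₁.1 - ζ₂.1 := by rw [← e₁t, ← e₂t]; ring
      have hTa : |z₁.1 - z₂.1| < r ^ 2 := by
        rw [hδt, abs_sub_lt_iff]
        constructor <;> linarith
      refine max_lt ((half_rpow_lt_iff (abs_nonneg _) hr).mpr hTa) (max_lt ?_ (max_lt ?_ ?_))
      · have : z₁.2.2 - z.2.2 = ζ₁.2.2 := by rw [← e₁v]; abel
        rw [this]; exact hv₁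
      · have : z₂.2.2 - z.2.2 = ζ₂.2.2 := by rw [← e₂v]; abel
        rw [this]; exact hv₂
      · have hD : (z₁.2.1 - z₂.2.1) - (z₁.1 - z₂.1) • z.2.2 = ζ₁.2.1 - ζ₂.2.1 := by
          rw [← e₁x, ← e₂x, hδt]
          module
        rw [hD]
        refine (third_rpow_lt_iff (norm_nonneg _) hr).mpr ?_
        calc ‖ζ₁.2.1 - ζ₂.2.1‖ ≤ ‖ζ₁.2.1‖ + ‖ζ₂.2.1‖ := norm_sub_le _ _
          _ < 2 * r ^ 3 := by linarith
    · intro hmr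
      have hr : 0 < r := lt_of_le_of_lt hm0 hmr
      have hC := hmr
      rw [hm, kdistCand_eq, max_lt_iff, max_lt_iff, max_lt_iff] at hC
      obtain ⟨h1, h2, h3, h4⟩ := hC
      have hΔt : |z₁.1 - z₂.1| < r ^ 2 := (half_rpow_lt_iff (abs_nonneg _) hr).mp h1
      have hD : ‖(z₁.2.1 - z₂.2.1) - (z₁.1 - z₂.1) • w‖ < 2 * r ^ 3 :=
        (third_rpow_lt_iff (norm_nonneg _) hr).mp h4
      set s : ℝ := max z₁.1 z₂.1 with hs
      set y : EuclideanSpace ℝ (Fin d) :=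
        (2⁻¹ : ℝ) • (z₁.2.1 + z₂.2.1 - (z₁.1 - s) • w - (z₂.1 - s) • w) with hy
      have hs1 : z₁.1 ≤ s := le_max_left _ _
      have hs2 : z₂.1 ≤ s := le_max_right _ _
      have habs1 : s - z₁.1 ≤ |z₁.1 - z₂.1| := by
        have := le_abs_self (z₂.1 - z₁.1)
        have := abs_sub_comm z₁.1 z₂.1
        have := abs_nonneg (z₁.1 - z₂.1)
        rcases max_cases z₁.1 z₂.1 with ⟨h, _⟩ | ⟨h, _⟩ <;> rw [hs, h] <;> linarith
      have habs2 : s - z₂.1 ≤ |z₁.1 - z₂.1| := by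
        have := le_abs_self (z₁.1 - z₂.1)
        have := abs_nonneg (z₁.1 - z₂.1)
        rcases max_cases z₁.1 z₂.1 with ⟨h, _⟩ | ⟨h, _⟩ <;> rw [hs, h] <;> linarith
      have hx1 : z₁.2.1 - y - (z₁.1 - s) • w
          = (2⁻¹ : ℝ) • ((z₁.2.1 - z₂.2.1) - (z₁.1 - z₂.1) • w) := by
        rw [hy]; module
      have hx2 : z₂.2.1 - y - (z₂.1 - s) • w
          = (-(2⁻¹) : ℝ) • ((z₁.2.1 - z₂.2.1) - (z₁.1 - z₂.1) • w) := by
        rw [hy]; module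
      have hnorm1 : ‖z₁.2.1 - y - (z₁.1 - s) • w‖ < r ^ 3 := by
        rw [hx1, norm_smul, Real.norm_eq_abs]
        rw [abs_of_pos (by norm_num : (0:ℝ) < 2⁻¹)]
        linarith
      have hnorm2 : ‖z₂.2.1 - y - (z₂.1 - s) • w‖ < r ^ 3 := by
        rw [hx2, norm_smul, Real.norm_eq_abs]
        rw [abs_of_neg (by norm_num : (-(2⁻¹):ℝ) < 0)]
        linarith
      refine ⟨hr, (s, y, w),
        ⟨(z₁.1 - s, z₁.2.1 - y - (z₁.1 - s) • w, z₁.2.2 - w), ?_, ?_⟩,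
        ⟨(z₂.1 - s, z₂.2.1 - y - (z₂.1 - s) • w, z₂.2.2 - w), ?_, ?_⟩⟩
      · simp only [kCyl, Set.mem_prod, Set.mem_Ioc, mem_ball_zero_iff]
        exact ⟨⟨by linarith, by linarith⟩, hnorm1, h2⟩
      · show kOp _ _ = z₁
        simp only [kOp]
        refine Prod.ext (by ring) (Prod.ext ?_ ?_) <;> simp <;> abel
      · simp only [kCyl, Set.mem_prod, Set.mem_Ioc, mem_ball_zero_iff]
        exact ⟨⟨by linarith, by linarith⟩, hnorm2, h3⟩
      · show kOp _ _ = z₂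
        simp only [kOp]
        refine Prod.ext (by ring) (Prod.ext ?_ ?_) <;> simp <;> abel
  rw [kdist, hset, csInf_Ioi]
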